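/- Suppose ζ₀ is a nonnegative integrable function on [0,1] with ∫₀¹ ζ₀ = 1 satisfying the one-dimensional Perron–Frobenius equation ζ₀(x) = g₀'(x) ζ₀(g₀(x)) + g₁'(x) ζ₀(g₁(x)) a.e., and suppose every nonnegative integrable solution of this equation with integral 1 equals ζ₀ a.e. Then for every nonnegative integrable ρ on [0,1]² with ∫∫ ρ = 1 that is an invariant density for F, the two marginals of ρ coincide with ζ₀: for a.e. x, ∫₀¹ ρ(x,y) dy = ζ₀(x) and ∫₀¹ ρ(y,x) dy = ζ₀(x). -/

import Mathlib

open Set MeasureTheory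


/-- A nonnegative integrable function `ρ` on `[0,1]²` is an *invariant density* for the
triangular map `F` built from `f₀, f₁, g₀, g₁` if it satisfies the Perron–Frobenius
fixed-point equation almost everywhere on the square. -/
def IsInvariantDensity (f₀ f₁ g₀ g₁ : ℝ → ℝ) (ρ : ℝ × ℝ → ℝ) : Prop :=
  (∀ p ∈ Set.Icc (0:ℝ) 1 ×ˢ Set.Icc (0:ℝ) 1, 0 ≤ ρ p) ∧
  MeasureTheory.IntegrableOn ρ (Set.Icc 0 1 ×ˢ Set.Icc 0 1) ∧
  (∀ᵐ p ∂(MeasureTheory.volume.restrict (Set.Icc (0:ℝ) 1 ×ˢ Set.Icc (0:ℝ) 1)),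
    (p.2 < 1/2 → ρ p = deriv g₀ p.1 * deriv f₀ p.2 * ρ (g₀ p.1, f₀ p.2)) ∧
    (1/2 ≤ p.2 → ρ p = deriv g₁ p.1 * deriv f₁ p.2 * ρ (g₁ p.1, f₁ p.2)))

private lemma aux_cov {f : ℝ → ℝ} {a b : ℝ}
    (hd : ∀ x ∈ Ioo a b, HasDerivAt f (deriv f x) x)
    (hpos : ∀ x ∈ Ioo a b, 0 < deriv f x)
    (hinj : InjOn f (Ioo a b))
    (h : ℝ → ℝ) :
    ∫ u in f '' Ioo a b, h u = ∫ x in Ioo a b, deriv f x * h (f x) := by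
  rw [MeasureTheory.integral_image_eq_integral_abs_deriv_smul measurableSet_Ioo
    (fun x hx => (hd x hx).hasDerivWithinAt) hinj h]
  refine setIntegral_congr_fun measurableSet_Ioo fun x hx => ?_
  rw [abs_of_pos (hpos x hx), smul_eq_mul]

private lemma aux_null {f : ℝ → ℝ} {s N : Set ℝ} (hf : DifferentiableOn ℝ f s)
    (hN : volume N = 0) : volume (f '' (N ∩ s)) = 0 :=
  MeasureTheory.addHaar_image_eq_zero_of_differentiableOn_of_addHaar_eq_zero volume
    (hf.mono inter_subset_right) (measure_mono_null inter_subset_left hN)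

private lemma aux_transport {f g : ℝ → ℝ} {a b : ℝ} {P : ℝ → Prop}
    (hdiff : DifferentiableOn ℝ f (Icc a b))
    (hgmem : ∀ y ∈ Ioo (0:ℝ) 1, g y ∈ Ioo a b)
    (hfg : ∀ y ∈ Icc (0:ℝ) 1, f (g y) = y)
    (hP : ∀ᵐ t ∂(volume.restrict (Ioo a b)), P t) :
    ∀ᵐ x ∂(volume.restrict (Ioo (0:ℝ) 1)), P (g x) := by
  have h0 : volume ({t | ¬ P t} ∩ Ioo a b) = 0 := by
    have h := hP
    rw [ae_iff, Measure.restrict_apply' measurableSet_Ioo] at h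
    exact h
  have h1 : volume (f '' (({t | ¬ P t} ∩ Ioo a b) ∩ Icc a b)) = 0 := aux_null hdiff h0
  rw [ae_iff, Measure.restrict_apply' measurableSet_Ioo]
  refine measure_mono_null (fun x hx => ?_) h1
  obtain ⟨hnp, hx1⟩ := hx
  have hg : g x ∈ Ioo a b := hgmem x hx1
  exact ⟨g x, ⟨⟨hnp, hg⟩, Ioo_subset_Icc_self hg⟩, hfg x (Ioo_subset_Icc_self hx1)⟩

private lemma aux_pack {f g : ℝ → ℝ} {a b : ℝ} (hab : a < b)
    (hcont : ContinuousOn f (Icc a b))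
    (hd : ∀ x ∈ Ioo a b, HasDerivAt f (deriv f x) x)
    (hpos : ∀ x ∈ Ioo a b, 0 < deriv f x)
    (hfa : f a = 0) (hfb : f b = 1)
    (hgmaps : MapsTo g (Icc 0 1) (Icc a b))
    (hgright : ∀ y ∈ Icc (0:ℝ) 1, f (g y) = y) :
    (∀ y ∈ Ioo (0:ℝ) 1, g y ∈ Ioo a b) ∧
    f '' Ioo a b = Ioo 0 1 ∧ g '' Ioo 0 1 = Ioo a b ∧
    InjOn f (Ioo a b) ∧ InjOn g (Ioo 0 1) ∧
    (∀ y ∈ Ioo (0:ℝ) 1, HasDerivAt g (deriv g y) y ∧ 0 < deriv g y ∧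
      deriv g y * deriv f (g y) = 1) := by
  have hmono : StrictMonoOn f (Icc a b) :=
    strictMonoOn_of_deriv_pos (convex_Icc a b) hcont
      (fun x hx => hpos x (by rwa [interior_Icc] at hx))
  have hgmem : ∀ y ∈ Ioo (0:ℝ) 1, g y ∈ Ioo a b := by
    intro y hy
    have hy' : y ∈ Icc (0:ℝ) 1 := Ioo_subset_Icc_self hy
    have hgI : g y ∈ Icc a b := hgmaps hy'
    constructor
    · rcases eq_or_lt_of_le hgI.1 with h | h
      · exfalso
        have : f (g y) = 0 := by rw [← h, hfa]
        rw [hgright y hy'] at this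
        exact absurd this (ne_of_gt hy.1)
      · exact h
    · rcases eq_or_lt_of_le hgI.2 with h | h
      · exfalso
        have : f (g y) = 1 := by rw [h, hfb]
        rw [hgright y hy'] at this
        exact absurd this (ne_of_lt hy.2)
      · exact h
  have himf : f '' Ioo a b = Ioo 0 1 := by
    apply Subset.antisymm
    · rintro _ ⟨x, hx, rfl⟩
      constructor
      · rw [← hfa]
        exact hmono (left_mem_Icc.2 hab.le) (Ioo_subset_Icc_self hx) hx.1
      · rw [← hfb]
        exact hmono (Ioo_subset_Icc_self hx) (right_mem_Icc.2 hab.le) hx.2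
    · intro y hy
      exact ⟨g y, hgmem y hy, hgright y (Ioo_subset_Icc_self hy)⟩
  have hfinj : InjOn f (Ioo a b) := (hmono.injOn).mono Ioo_subset_Icc_self
  have himg : g '' Ioo 0 1 = Ioo a b := by
    apply Subset.antisymm
    · rintro _ ⟨y, hy, rfl⟩
      exact hgmem y hy
    · intro x hx
      have hfx : f x ∈ Ioo 0 1 := by rw [← himf]; exact mem_image_of_mem f hx
      refine ⟨f x, hfx, ?_⟩
      apply hfinj (hgmem _ hfx) hx
      exact hgright (f x) (Ioo_subset_Icc_self hfx)
  have hginj : InjOn g (Ioo 0 1) := by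
    intro y1 h1 y2 h2 he
    have := hgright y1 (Ioo_subset_Icc_self h1)
    rw [he, hgright y2 (Ioo_subset_Icc_self h2)] at this
    exact this.symm
  have hgsm : StrictMonoOn g (Ioo 0 1) := by
    intro y1 h1 y2 h2 hlt
    by_contra hcon
    push_neg at hcon
    have : f (g y2) ≤ f (g y1) :=
      hmono.monotoneOn (Ioo_subset_Icc_self (hgmem _ h2)) (Ioo_subset_Icc_self (hgmem _ h1)) hcon
    rw [hgright y1 (Ioo_subset_Icc_self h1), hgright y2 (Ioo_subset_Icc_self h2)] at this
    exact absurd this (not_le.2 hlt)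
  refine ⟨hgmem, himf, himg, hfinj, hginj, fun y hy => ?_⟩
  have hgy := hgmem y hy
  have hcg : ContinuousAt g y := by
    apply hgsm.continuousAt_of_image_mem_nhds (isOpen_Ioo.mem_nhds hy)
    rw [himg]
    exact isOpen_Ioo.mem_nhds hgy
  have hder : HasDerivAt g (deriv f (g y))⁻¹ y := by
    apply HasDerivAt.of_local_left_inverse hcg (hd (g y) hgy) (ne_of_gt (hpos (g y) hgy))
    filter_upwards [isOpen_Ioo.mem_nhds hy] with z hz
    exact hgright z (Ioo_subset_Icc_self hz)
  have hdeq : deriv g y = (deriv f (g y))⁻¹ := hder.deriv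
  refine ⟨by rwa [hdeq], by rw [hdeq]; exact inv_pos.2 (hpos (g y) hgy), ?_⟩
  rw [hdeq]
  exact inv_mul_cancel₀ (ne_of_gt (hpos (g y) hgy))

set_option maxHeartbeats 2000000 in
theorem invariant_density_marginals_eq_unique_PF_solution
    (α : ℝ) (hα : 1 < α)
    (f₀ f₁ g₀ g₁ : ℝ → ℝ)
    (hf₀C : ContDiffOn ℝ 2 f₀ (Icc 0 (1/2)))
    (hf₀0 : f₀ 0 = 0) (hf₀half : f₀ (1/2) = 1)
    (hf₀deriv : ∀ x ∈ Icc (0:ℝ) (1/2), α ≤ deriv f₀ x)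
    (hf₀maps : MapsTo f₀ (Icc 0 (1/2)) (Icc 0 1))
    (hf₁ : ∀ x, f₁ x = 1 - f₀ (1 - x))
    (hg₀maps : MapsTo g₀ (Icc 0 1) (Icc 0 (1/2)))
    (hg₁maps : MapsTo g₁ (Icc 0 1) (Icc (1/2) 1))
    (hg₀left : ∀ x ∈ Icc (0:ℝ) (1/2), g₀ (f₀ x) = x)
    (hg₀right : ∀ y ∈ Icc (0:ℝ) 1, f₀ (g₀ y) = y)
    (hg₁left : ∀ x ∈ Icc (1/2:ℝ) 1, g₁ (f₁ x) = x)
    (hg₁right : ∀ y ∈ Icc (0:ℝ) 1, f₁ (g₁ y) = y)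
    (ζ₀ : ℝ → ℝ)
    (hζ₀pos : ∀ x ∈ Icc (0:ℝ) 1, 0 ≤ ζ₀ x)
    (hζ₀int : IntegrableOn ζ₀ (Icc 0 1))
    (hζ₀norm : (∫ x in Icc (0:ℝ) 1, ζ₀ x) = 1)
    (hζ₀PF : ∀ᵐ x ∂(volume.restrict (Icc (0:ℝ) 1)),
      ζ₀ x = deriv g₀ x * ζ₀ (g₀ x) + deriv g₁ x * ζ₀ (g₁ x))
    (hζ₀uniq : ∀ ζ : ℝ → ℝ, (∀ x ∈ Icc (0:ℝ) 1, 0 ≤ ζ x) →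
      IntegrableOn ζ (Icc 0 1) → (∫ x in Icc (0:ℝ) 1, ζ x) = 1 →
      (∀ᵐ x ∂(volume.restrict (Icc (0:ℝ) 1)),
        ζ x = deriv g₀ x * ζ (g₀ x) + deriv g₁ x * ζ (g₁ x)) →
      (∀ᵐ x ∂(volume.restrict (Icc (0:ℝ) 1)), ζ x = ζ₀ x)) :
    ∀ ρ : ℝ × ℝ → ℝ, IsInvariantDensity f₀ f₁ g₀ g₁ ρ →
      (∫ p in Icc (0:ℝ) 1 ×ˢ Icc (0:ℝ) 1, ρ p) = 1 →
      ∀ᵐ x ∂(volume.restrict (Icc (0:ℝ) 1)),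
        (∫ y in Icc (0:ℝ) 1, ρ (x, y)) = ζ₀ x ∧
        (∫ y in Icc (0:ℝ) 1, ρ (y, x)) = ζ₀ x := by
  intro ρ hinv hnorm
  obtain ⟨hρpos, hρint, hρae⟩ := hinv
  -- basic facts about f₀
  have hα0 : (0:ℝ) < α := lt_trans one_pos hα
  have hcont₀ : ContinuousOn f₀ (Icc 0 (1/2)) := hf₀C.continuousOn
  have hdiff₀ : DifferentiableOn ℝ f₀ (Icc 0 (1/2)) := hf₀C.differentiableOn two_ne_zero
  have hd₀ : ∀ x ∈ Ioo (0:ℝ) (1/2), HasDerivAt f₀ (deriv f₀ x) x := fun x hx =>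
    ((hdiff₀ x (Ioo_subset_Icc_self hx)).differentiableAt (Icc_mem_nhds hx.1 hx.2)).hasDerivAt
  have hpos₀ : ∀ x ∈ Ioo (0:ℝ) (1/2), 0 < deriv f₀ x := fun x hx =>
    lt_of_lt_of_le hα0 (hf₀deriv x (Ioo_subset_Icc_self hx))
  -- basic facts about f₁
  have hf₁fun : f₁ = fun x => 1 - f₀ (1 - x) := funext hf₁
  have hmaps_aux : MapsTo (fun x : ℝ => 1 - x) (Icc (1/2:ℝ) 1) (Icc 0 (1/2)) := fun x hx =>
    ⟨(by linarith [hx.2] : (0:ℝ) ≤ 1 - x), (by linarith [hx.1] : (1:ℝ) - x ≤ 1/2)⟩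
  have hcont₁ : ContinuousOn f₁ (Icc (1/2) 1) := by
    rw [hf₁fun]
    exact continuousOn_const.sub
      (hcont₀.comp (continuousOn_const.sub continuousOn_id) hmaps_aux)
  have hdiff₁ : DifferentiableOn ℝ f₁ (Icc (1/2) 1) := by
    rw [hf₁fun]
    exact (differentiableOn_const _).sub
      (hdiff₀.comp ((differentiableOn_const _).sub differentiableOn_id) hmaps_aux)
  have hd₁' : ∀ x ∈ Ioo (1/2:ℝ) 1, HasDerivAt f₁ (deriv f₀ (1 - x)) x := by
    intro x hx
    have hmem : (1 - x) ∈ Ioo (0:ℝ) (1/2) := ⟨by linarith [hx.2], by linarith [hx.1]⟩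
    have h1 := hd₀ (1 - x) hmem
    have h2 : HasDerivAt (fun y : ℝ => 1 - y) (-1) x := by
      simpa using (hasDerivAt_id x).const_sub 1
    have h3 := HasDerivAt.comp x h1 h2
    have h4 := h3.const_sub 1
    rw [hf₁fun]
    simpa [Function.comp] using h4
  have hd₁deriv : ∀ x ∈ Ioo (1/2:ℝ) 1, deriv f₁ x = deriv f₀ (1 - x) := fun x hx =>
    (hd₁' x hx).deriv
  have hd₁ : ∀ x ∈ Ioo (1/2:ℝ) 1, HasDerivAt f₁ (deriv f₁ x) x := by
    intro x hx
    rw [hd₁deriv x hx]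
    exact hd₁' x hx
  have hpos₁ : ∀ x ∈ Ioo (1/2:ℝ) 1, 0 < deriv f₁ x := by
    intro x hx
    rw [hd₁deriv x hx]
    refine lt_of_lt_of_le hα0 (hf₀deriv (1 - x) ?_)
    exact ⟨by linarith [hx.2], by linarith [hx.1]⟩
  have hf₁half : f₁ (1/2) = 0 := by
    rw [hf₁ (1/2)]
    norm_num [hf₀half]
  have hf₁one : f₁ 1 = 1 := by
    rw [hf₁ 1]
    norm_num [hf₀0]
  -- packs
  obtain ⟨gmem₀, himf₀, himg₀, hfinj₀, hginj₀, hgd₀⟩ :=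
    aux_pack (by norm_num : (0:ℝ) < 1/2) hcont₀ hd₀ hpos₀ hf₀0 hf₀half hg₀maps hg₀right
  obtain ⟨gmem₁, himf₁, himg₁, hfinj₁, hginj₁, hgd₁⟩ :=
    aux_pack (by norm_num : (1/2:ℝ) < 1) hcont₁ hd₁ hpos₁ hf₁half hf₁one hg₁maps hg₁right
  -- change of variables
  have cov₀ : ∀ h : ℝ → ℝ,
      ∫ u in Ioo (0:ℝ) 1, h u = ∫ x in Ioo (0:ℝ) (1/2), deriv f₀ x * h (f₀ x) := by
    intro h
    rw [← himf₀]
    exact aux_cov hd₀ hpos₀ hfinj₀ h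
  have cov₁ : ∀ h : ℝ → ℝ,
      ∫ u in Ioo (0:ℝ) 1, h u = ∫ x in Ioo (1/2:ℝ) 1, deriv f₁ x * h (f₁ x) := by
    intro h
    rw [← himf₁]
    exact aux_cov hd₁ hpos₁ hfinj₁ h
  have gcov₀ : ∀ h : ℝ → ℝ,
      ∫ u in Ioo (0:ℝ) (1/2), h u = ∫ y in Ioo (0:ℝ) 1, deriv g₀ y * h (g₀ y) := by
    intro h
    rw [← himg₀]
    exact aux_cov (fun y hy => (hgd₀ y hy).1) (fun y hy => (hgd₀ y hy).2.1) hginj₀ h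
  have gcov₁ : ∀ h : ℝ → ℝ,
      ∫ u in Ioo (1/2:ℝ) 1, h u = ∫ y in Ioo (0:ℝ) 1, deriv g₁ y * h (g₁ y) := by
    intro h
    rw [← himg₁]
    exact aux_cov (fun y hy => (hgd₁ y hy).1) (fun y hy => (hgd₁ y hy).2.1) hginj₁ h
  -- measure bookkeeping
  have hsq : volume.restrict (Icc (0:ℝ) 1 ×ˢ Icc (0:ℝ) 1)
      = (volume.restrict (Icc (0:ℝ) 1)).prod (volume.restrict (Icc (0:ℝ) 1)) := by
    rw [Measure.volume_eq_prod, ← Measure.prod_restrict]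
  have hρint2 : Integrable ρ
      ((volume.restrict (Icc (0:ℝ) 1)).prod (volume.restrict (Icc (0:ℝ) 1))) := by
    rw [← hsq]; exact hρint
  have hρae2 : ∀ᵐ p ∂((volume.restrict (Icc (0:ℝ) 1)).prod (volume.restrict (Icc (0:ℝ) 1))),
      (p.2 < 1/2 → ρ p = deriv g₀ p.1 * deriv f₀ p.2 * ρ (g₀ p.1, f₀ p.2)) ∧
      (1/2 ≤ p.2 → ρ p = deriv g₁ p.1 * deriv f₁ p.2 * ρ (g₁ p.1, f₁ p.2)) := by
    rw [← hsq]; exact hρae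
  have hQswap : ∀ᵐ p ∂((volume.restrict (Icc (0:ℝ) 1)).prod (volume.restrict (Icc (0:ℝ) 1))),
      ((p.swap).2 < 1/2 → ρ p.swap =
        deriv g₀ (p.swap).1 * deriv f₀ (p.swap).2 * ρ (g₀ (p.swap).1, f₀ (p.swap).2)) ∧
      (1/2 ≤ (p.swap).2 → ρ p.swap =
        deriv g₁ (p.swap).1 * deriv f₁ (p.swap).2 * ρ (g₁ (p.swap).1, f₁ (p.swap).2)) :=
    (((Measure.measurePreserving_swap (μ := volume.restrict (Icc (0:ℝ) 1)) (ν := volume.restrict (Icc (0:ℝ) 1))).quasiMeasurePreserving).tendsto_ae).eventually hρae2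
  have hρswapint : Integrable (fun p : ℝ × ℝ => ρ (p.2, p.1))
      ((volume.restrict (Icc (0:ℝ) 1)).prod (volume.restrict (Icc (0:ℝ) 1))) := hρint2.swap
  have hIntX : ∀ᵐ x ∂(volume.restrict (Icc (0:ℝ) 1)),
      Integrable (fun y => ρ (x, y)) (volume.restrict (Icc (0:ℝ) 1)) := hρint2.prod_right_ae
  have hIntY : ∀ᵐ t ∂(volume.restrict (Icc (0:ℝ) 1)),
      Integrable (fun y => ρ (y, t)) (volume.restrict (Icc (0:ℝ) 1)) := hρswapint.prod_right_ae
  have hζXint : Integrable (fun x => ∫ y in Icc (0:ℝ) 1, ρ (x, y))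
      (volume.restrict (Icc (0:ℝ) 1)) := hρint2.integral_prod_left
  have hζYint : Integrable (fun t => ∫ y in Icc (0:ℝ) 1, ρ (y, t))
      (volume.restrict (Icc (0:ℝ) 1)) := hρswapint.integral_prod_left
  have haeX : ∀ᵐ x ∂(volume.restrict (Icc (0:ℝ) 1)), ∀ᵐ y ∂(volume.restrict (Icc (0:ℝ) 1)),
      (y < 1/2 → ρ (x, y) = deriv g₀ x * deriv f₀ y * ρ (g₀ x, f₀ y)) ∧
      (1/2 ≤ y → ρ (x, y) = deriv g₁ x * deriv f₁ y * ρ (g₁ x, f₁ y)) :=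
    Measure.ae_ae_of_ae_prod hρae2
  have haeY : ∀ᵐ t ∂(volume.restrict (Icc (0:ℝ) 1)), ∀ᵐ y ∂(volume.restrict (Icc (0:ℝ) 1)),
      (t < 1/2 → ρ (y, t) = deriv g₀ y * deriv f₀ t * ρ (g₀ y, f₀ t)) ∧
      (1/2 ≤ t → ρ (y, t) = deriv g₁ y * deriv f₁ t * ρ (g₁ y, f₁ t)) :=
    Measure.ae_ae_of_ae_prod hQswap
  -- normalization
  have hsqnorm : (∫ z, ρ z ∂((volume.restrict (Icc (0:ℝ) 1)).prod
      (volume.restrict (Icc (0:ℝ) 1)))) = 1 := by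
    rw [← hsq]; exact hnorm
  have hXnorm : (∫ x in Icc (0:ℝ) 1, ∫ y in Icc (0:ℝ) 1, ρ (x, y)) = 1 := by
    rw [← integral_prod ρ hρint2]; exact hsqnorm
  have hYnorm : (∫ t in Icc (0:ℝ) 1, ∫ y in Icc (0:ℝ) 1, ρ (y, t)) = 1 := by
    rw [← integral_prod _ hρswapint]
    have h' := integral_prod_swap (μ := volume.restrict (Icc (0:ℝ) 1))
      (ν := volume.restrict (Icc (0:ℝ) 1)) ρ
    exact h'.trans hsqnorm
  -- subset facts
  have hsub1 : Ico (0:ℝ) (1/2) ⊆ Icc 0 1 := fun y hy => ⟨hy.1, by linarith [hy.2]⟩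
  have hsub2 : Icc (1/2:ℝ) 1 ⊆ Icc 0 1 := fun y hy => ⟨by linarith [hy.1], hy.2⟩
  have hsub3 : Ioo (0:ℝ) (1/2) ⊆ Icc 0 1 := fun y hy => ⟨hy.1.le, by linarith [hy.2]⟩
  have hsub4 : Ioo (1/2:ℝ) 1 ⊆ Icc 0 1 := fun y hy => ⟨by linarith [hy.1], hy.2.le⟩
  have hdisj : Disjoint (Ico (0:ℝ) (1/2)) (Icc (1/2:ℝ) 1) :=
    Set.disjoint_left.2 fun y h1 h2 => absurd h2.1 (not_le.2 h1.2)
  have hsplitset : Ico (0:ℝ) (1/2) ∪ Icc (1/2:ℝ) 1 = Icc 0 1 :=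
    Ico_union_Icc_eq_Icc (by norm_num) (by norm_num)
  -- PF equation for the first marginal
  have hPFX : ∀ᵐ x ∂(volume.restrict (Icc (0:ℝ) 1)),
      (∫ y in Icc (0:ℝ) 1, ρ (x, y)) =
        deriv g₀ x * (∫ y in Icc (0:ℝ) 1, ρ (g₀ x, y)) +
        deriv g₁ x * (∫ y in Icc (0:ℝ) 1, ρ (g₁ x, y)) := by
    filter_upwards [haeX, hIntX] with x hae hint
    have hint' : IntegrableOn (fun y => ρ (x, y)) (Icc 0 1) volume := hint
    have hsplit : (∫ y in Icc (0:ℝ) 1, ρ (x, y)) =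
        (∫ y in Ico (0:ℝ) (1/2), ρ (x, y)) + ∫ y in Icc (1/2:ℝ) 1, ρ (x, y) := by
      rw [← hsplitset]
      exact setIntegral_union hdisj measurableSet_Icc (hint'.mono_set hsub1)
        (hint'.mono_set hsub2)
    have h1 : (∫ y in Ico (0:ℝ) (1/2), ρ (x, y)) =
        deriv g₀ x * ∫ y in Icc (0:ℝ) 1, ρ (g₀ x, y) := by
      have hae' : ∀ᵐ y ∂(volume.restrict (Ico (0:ℝ) (1/2))),
          ρ (x, y) = deriv g₀ x * (deriv f₀ y * ρ (g₀ x, f₀ y)) := by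
        filter_upwards [ae_restrict_of_ae_restrict_of_subset hsub1 hae,
          ae_restrict_mem measurableSet_Ico] with y hy hymem
        rw [hy.1 hymem.2]; ring
      rw [integral_congr_ae hae', MeasureTheory.integral_const_mul]
      refine congrArg (fun z => deriv g₀ x * z) ?_
      calc (∫ y in Ico (0:ℝ) (1/2), deriv f₀ y * ρ (g₀ x, f₀ y))
          = ∫ y in Ioo (0:ℝ) (1/2), deriv f₀ y * ρ (g₀ x, f₀ y) :=
            (setIntegral_congr_set Ioo_ae_eq_Ico).symm
        _ = ∫ u in Ioo (0:ℝ) 1, ρ (g₀ x, u) := (cov₀ (fun u => ρ (g₀ x, u))).symm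
        _ = ∫ y in Icc (0:ℝ) 1, ρ (g₀ x, y) := setIntegral_congr_set Ioo_ae_eq_Icc
    have h2 : (∫ y in Icc (1/2:ℝ) 1, ρ (x, y)) =
        deriv g₁ x * ∫ y in Icc (0:ℝ) 1, ρ (g₁ x, y) := by
      have hae' : ∀ᵐ y ∂(volume.restrict (Icc (1/2:ℝ) 1)),
          ρ (x, y) = deriv g₁ x * (deriv f₁ y * ρ (g₁ x, f₁ y)) := by
        filter_upwards [ae_restrict_of_ae_restrict_of_subset hsub2 hae,
          ae_restrict_mem measurableSet_Icc] with y hy hymem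
        rw [hy.2 hymem.1]; ring
      rw [integral_congr_ae hae', MeasureTheory.integral_const_mul]
      refine congrArg (fun z => deriv g₁ x * z) ?_
      calc (∫ y in Icc (1/2:ℝ) 1, deriv f₁ y * ρ (g₁ x, f₁ y))
          = ∫ y in Ioo (1/2:ℝ) 1, deriv f₁ y * ρ (g₁ x, f₁ y) :=
            (setIntegral_congr_set Ioo_ae_eq_Icc).symm
        _ = ∫ u in Ioo (0:ℝ) 1, ρ (g₁ x, u) := (cov₁ (fun u => ρ (g₁ x, u))).symm
        _ = ∫ y in Icc (0:ℝ) 1, ρ (g₁ x, y) := setIntegral_congr_set Ioo_ae_eq_Icc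
    rw [hsplit, h1, h2]
  -- first marginal equals ζ₀
  have hζXpos : ∀ x ∈ Icc (0:ℝ) 1, 0 ≤ ∫ y in Icc (0:ℝ) 1, ρ (x, y) := fun x hx =>
    setIntegral_nonneg measurableSet_Icc fun y hy => hρpos (x, y) (Set.mk_mem_prod hx hy)
  have hX := hζ₀uniq (fun x => ∫ y in Icc (0:ℝ) 1, ρ (x, y)) hζXpos hζXint hXnorm hPFX
  -- relations for the second marginal
  have RelA : ∀ᵐ t ∂(volume.restrict (Ioo (0:ℝ) (1/2))),
      (∫ y in Icc (0:ℝ) 1, ρ (y, t)) =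
        deriv f₀ t * ∫ u in Ioo (0:ℝ) (1/2), ρ (u, f₀ t) := by
    filter_upwards [ae_restrict_of_ae_restrict_of_subset hsub3 haeY,
      ae_restrict_mem measurableSet_Ioo] with t haet ht
    have hae' : ∀ᵐ y ∂(volume.restrict (Icc (0:ℝ) 1)),
        ρ (y, t) = deriv f₀ t * (deriv g₀ y * ρ (g₀ y, f₀ t)) := by
      filter_upwards [haet] with y hy
      rw [hy.1 ht.2]; ring
    rw [integral_congr_ae hae', MeasureTheory.integral_const_mul]
    refine congrArg (fun z => deriv f₀ t * z) ?_
    calc (∫ y in Icc (0:ℝ) 1, deriv g₀ y * ρ (g₀ y, f₀ t))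
        = ∫ y in Ioo (0:ℝ) 1, deriv g₀ y * ρ (g₀ y, f₀ t) :=
          (setIntegral_congr_set Ioo_ae_eq_Icc).symm
      _ = ∫ u in Ioo (0:ℝ) (1/2), ρ (u, f₀ t) := (gcov₀ (fun u => ρ (u, f₀ t))).symm
  have RelB : ∀ᵐ t ∂(volume.restrict (Ioo (1/2:ℝ) 1)),
      (∫ y in Icc (0:ℝ) 1, ρ (y, t)) =
        deriv f₁ t * ∫ u in Ioo (1/2:ℝ) 1, ρ (u, f₁ t) := by
    filter_upwards [ae_restrict_of_ae_restrict_of_subset hsub4 haeY,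
      ae_restrict_mem measurableSet_Ioo] with t haet ht
    have hae' : ∀ᵐ y ∂(volume.restrict (Icc (0:ℝ) 1)),
        ρ (y, t) = deriv f₁ t * (deriv g₁ y * ρ (g₁ y, f₁ t)) := by
      filter_upwards [haet] with y hy
      rw [hy.2 ht.1.le]; ring
    rw [integral_congr_ae hae', MeasureTheory.integral_const_mul]
    refine congrArg (fun z => deriv f₁ t * z) ?_
    calc (∫ y in Icc (0:ℝ) 1, deriv g₁ y * ρ (g₁ y, f₁ t))
        = ∫ y in Ioo (0:ℝ) 1, deriv g₁ y * ρ (g₁ y, f₁ t) :=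
          (setIntegral_congr_set Ioo_ae_eq_Icc).symm
      _ = ∫ u in Ioo (1/2:ℝ) 1, ρ (u, f₁ t) := (gcov₁ (fun u => ρ (u, f₁ t))).symm
  have RelC : ∀ᵐ t ∂(volume.restrict (Icc (0:ℝ) 1)),
      (∫ y in Icc (0:ℝ) 1, ρ (y, t)) =
        (∫ u in Ioo (0:ℝ) (1/2), ρ (u, t)) + ∫ u in Ioo (1/2:ℝ) 1, ρ (u, t) := by
    filter_upwards [hIntY] with t hint
    have hint' : IntegrableOn (fun y => ρ (y, t)) (Icc 0 1) volume := hint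
    rw [← hsplitset, setIntegral_union hdisj measurableSet_Icc (hint'.mono_set hsub1)
      (hint'.mono_set hsub2), setIntegral_congr_set Ioo_ae_eq_Ico.symm,
      setIntegral_congr_set Ioo_ae_eq_Icc.symm]
  -- transports
  have TA : ∀ᵐ x ∂(volume.restrict (Ioo (0:ℝ) 1)),
      (∫ y in Icc (0:ℝ) 1, ρ (y, g₀ x)) =
        deriv f₀ (g₀ x) * ∫ u in Ioo (0:ℝ) (1/2), ρ (u, f₀ (g₀ x)) :=
    aux_transport hdiff₀ gmem₀ hg₀right RelA
  have TB : ∀ᵐ x ∂(volume.restrict (Ioo (0:ℝ) 1)),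
      (∫ y in Icc (0:ℝ) 1, ρ (y, g₁ x)) =
        deriv f₁ (g₁ x) * ∫ u in Ioo (1/2:ℝ) 1, ρ (u, f₁ (g₁ x)) :=
    aux_transport hdiff₁ gmem₁ hg₁right RelB
  have hres : volume.restrict (Icc (0:ℝ) 1) = volume.restrict (Ioo (0:ℝ) 1) :=
    (Measure.restrict_congr_set Ioo_ae_eq_Icc).symm
  rw [hres] at TA TB
  have hmemIoo : ∀ᵐ x ∂(volume.restrict (Icc (0:ℝ) 1)), x ∈ Ioo (0:ℝ) 1 := by
    rw [hres]; exact ae_restrict_mem measurableSet_Ioo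
  rw [← hres] at TA TB
  -- PF equation for the second marginal
  have hPFY : ∀ᵐ x ∂(volume.restrict (Icc (0:ℝ) 1)),
      (∫ y in Icc (0:ℝ) 1, ρ (y, x)) =
        deriv g₀ x * (∫ y in Icc (0:ℝ) 1, ρ (y, g₀ x)) +
        deriv g₁ x * (∫ y in Icc (0:ℝ) 1, ρ (y, g₁ x)) := by
    filter_upwards [RelC, TA, TB, hmemIoo] with x hC hA hB hx
    have hx' : x ∈ Icc (0:ℝ) 1 := Ioo_subset_Icc_self hx
    obtain ⟨-, -, hcan₀⟩ := hgd₀ x hx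
    obtain ⟨-, -, hcan₁⟩ := hgd₁ x hx
    rw [hA, hB, hg₀right x hx', hg₁right x hx', hC,
      ← mul_assoc, hcan₀, one_mul, ← mul_assoc, hcan₁, one_mul]
  have hζYpos : ∀ x ∈ Icc (0:ℝ) 1, 0 ≤ ∫ y in Icc (0:ℝ) 1, ρ (y, x) := fun x hx =>
    setIntegral_nonneg measurableSet_Icc fun y hy => hρpos (y, x) (Set.mk_mem_prod hy hx)
  have hY := hζ₀uniq (fun x => ∫ y in Icc (0:ℝ) 1, ρ (y, x)) hζYpos hζYint hYnorm hPFY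
  filter_upwards [hX, hY] with x h1 h2
  exact ⟨h1, h2⟩
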